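/- Let a, b : ℕ → ℂ be sequences and f, g : ℂ → ℂ functions such that for every w ∈ ℂ the series ∑_{n≥0} a_n · w^n / n! converges with sum f(w) and the series ∑_{n≥0} b_n · w^n / n! converges with sum g(w). Then for every w ∈ ℂ, the series ∑_{n≥0} (∑_{i+j=n} a_i · b_j) · w^{n+1} / (n+1)! converges, and its sum equals the Hurwitz (additive) convolution (f ∗ g)(w) = ∫_0^w f(u) · g(w − u) du, i.e., equals w · ∫_0^1 f(t·w) · g((1 − t)·w) dt. -/

import Mathlib

open MeasureTheory intervalIntegral

lemma beta_nat (i j : ℕ) :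
    (∫ t in (0:ℝ)..1, (t:ℂ)^i * (1-(t:ℂ))^j)
      = (i.factorial * j.factorial : ℂ) / ((i+j+1).factorial : ℂ) := by
  have hs : 0 < Complex.re ((i:ℂ)+1) := by
    simp only [Complex.add_re, Complex.natCast_re, Complex.one_re]; positivity
  have ht : 0 < Complex.re ((j:ℂ)+1) := by
    simp only [Complex.add_re, Complex.natCast_re, Complex.one_re]; positivity
  have hB := Complex.Gamma_mul_Gamma_eq_betaIntegral hs ht
  rw [Complex.betaIntegral] at hB
  simp only [add_sub_cancel_right, Complex.cpow_natCast] at hB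
  have h2 : ((i:ℂ)+1)+((j:ℂ)+1) = ((i+j+1 : ℕ):ℂ)+1 := by push_cast; ring
  rw [h2, Complex.Gamma_nat_eq_factorial, Complex.Gamma_nat_eq_factorial,
    Complex.Gamma_nat_eq_factorial] at hB
  have hne : (((i+j+1).factorial : ℕ) : ℂ) ≠ 0 := Nat.cast_ne_zero.2 (Nat.factorial_ne_zero _)
  rw [eq_div_iff hne]
  linear_combination -hB

lemma F_integral (A B w : ℂ) (i j : ℕ) :
    (∫ t in (0:ℝ)..1, (A * ((t:ℂ)*w)^i / (i.factorial : ℂ)) *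
      (B * ((1-(t:ℂ))*w)^j / (j.factorial : ℂ)))
      = A * B * w^(i+j) / (((i+j+1).factorial : ℕ) : ℂ) := by
  have h1 : (i.factorial : ℂ) ≠ 0 := Nat.cast_ne_zero.2 (Nat.factorial_ne_zero _)
  have h2 : (j.factorial : ℂ) ≠ 0 := Nat.cast_ne_zero.2 (Nat.factorial_ne_zero _)
  have h3 : (((i+j+1).factorial : ℕ) : ℂ) ≠ 0 := Nat.cast_ne_zero.2 (Nat.factorial_ne_zero _)
  have hrw : ∀ t : ℝ, (A * ((t:ℂ)*w)^i / (i.factorial : ℂ)) *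
      (B * ((1-(t:ℂ))*w)^j / (j.factorial : ℂ))
      = (A * B * w^(i+j) / ((i.factorial : ℂ) * (j.factorial : ℂ))) *
        ((t:ℂ)^i * (1-(t:ℂ))^j) := by
    intro t
    rw [mul_pow, mul_pow, pow_add]
    field_simp
  simp_rw [hrw]
  rw [intervalIntegral.integral_const_mul, beta_nat]
  field_simp

lemma prod_hasSum (a b : ℕ → ℂ) (f g : ℂ → ℂ)
    (hf : ∀ w : ℂ, HasSum (fun n : ℕ => a n * w ^ n / (n.factorial : ℂ)) (f w))
    (hg : ∀ w : ℂ, HasSum (fun n : ℕ => b n * w ^ n / (n.factorial : ℂ)) (g w))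
    (w : ℂ) :
    HasSum (fun p : ℕ × ℕ => a p.1 * b p.2 * w^(p.1+p.2) / (((p.1+p.2+1).factorial : ℕ) : ℂ))
      (∫ t in (0 : ℝ)..1, f ((t : ℂ) * w) * g ((1 - (t : ℂ)) * w)) := by
  have hFa : ∀ r : ℂ, Summable fun n => ‖a n * r ^ n / (n.factorial : ℂ)‖ :=
    fun r => summable_norm_iff.mpr (hf r).summable
  have hGb : ∀ r : ℂ, Summable fun n => ‖b n * r ^ n / (n.factorial : ℂ)‖ :=
    fun r => summable_norm_iff.mpr (hg r).summable
  have hptwise : ∀ t : ℝ, HasSum (fun p : ℕ × ℕ =>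
      (a p.1 * ((t:ℂ)*w)^p.1 / (p.1.factorial : ℂ)) *
      (b p.2 * ((1-(t:ℂ))*w)^p.2 / (p.2.factorial : ℂ)))
      (f ((t:ℂ)*w) * g ((1-(t:ℂ))*w)) :=
    fun t => HasSum.mul (f := fun n => a n * ((t:ℂ)*w)^n / (n.factorial : ℂ))
      (g := fun n => b n * ((1-(t:ℂ))*w)^n / (n.factorial : ℂ)) (hf _) (hg _)
      (summable_mul_of_summable_norm (f := fun n => a n * ((t:ℂ)*w)^n / (n.factorial : ℂ))
        (g := fun n => b n * ((1-(t:ℂ))*w)^n / (n.factorial : ℂ)) (hFa _) (hGb _))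
  have hFint : ∀ p : ℕ × ℕ, Integrable (fun t : ℝ =>
      (a p.1 * ((t:ℂ)*w)^p.1 / (p.1.factorial : ℂ)) *
      (b p.2 * ((1-(t:ℂ))*w)^p.2 / (p.2.factorial : ℂ)))
      (volume.restrict (Set.Ioc (0:ℝ) 1)) := by
    intro p
    apply Continuous.integrableOn_Ioc
    fun_prop
  have hCsum : Summable (fun p : ℕ × ℕ =>
      ‖a p.1 * w^p.1 / (p.1.factorial : ℂ)‖ * ‖b p.2 * w^p.2 / (p.2.factorial : ℂ)‖) :=
    Summable.mul_of_nonneg (f := fun n => ‖a n * w^n / (n.factorial : ℂ)‖)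
      (g := fun n => ‖b n * w^n / (n.factorial : ℂ)‖) (hFa w) (hGb w)
      (fun _ => norm_nonneg _) (fun _ => norm_nonneg _)
  have hbound : ∀ p : ℕ × ℕ, (∫ t, ‖(a p.1 * ((t:ℂ)*w)^p.1 / (p.1.factorial : ℂ)) *
      (b p.2 * ((1-(t:ℂ))*w)^p.2 / (p.2.factorial : ℂ))‖ ∂(volume.restrict (Set.Ioc (0:ℝ) 1)))
      ≤ ‖a p.1 * w^p.1 / (p.1.factorial : ℂ)‖ * ‖b p.2 * w^p.2 / (p.2.factorial : ℂ)‖ := by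
    intro p
    have key : ∀ t ∈ Set.Ioc (0:ℝ) 1, ‖(a p.1 * ((t:ℂ)*w)^p.1 / (p.1.factorial : ℂ)) *
        (b p.2 * ((1-(t:ℂ))*w)^p.2 / (p.2.factorial : ℂ))‖
        ≤ ‖a p.1 * w^p.1 / (p.1.factorial : ℂ)‖ * ‖b p.2 * w^p.2 / (p.2.factorial : ℂ)‖ := by
      intro t ht
      have e1 : ((1:ℂ) - (t:ℝ)) * w = (((1-t : ℝ):ℂ)) * w := by push_cast; ring
      have ht1 : |t| ≤ 1 := abs_le.2 ⟨by linarith [ht.1], ht.2⟩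
      have ht2 : |1 - t| ≤ 1 := abs_le.2 ⟨by linarith [ht.2], by linarith [ht.1]⟩
      rw [e1]
      simp only [norm_mul, norm_div, norm_pow, Complex.norm_real, Real.norm_eq_abs]
      gcongr <;>
        first
          | positivity
          | nlinarith [ht1, ht2, norm_nonneg w, abs_nonneg t, abs_nonneg (1-t)]
    calc _ ≤ ∫ _, ‖a p.1 * w^p.1 / (p.1.factorial : ℂ)‖ *
            ‖b p.2 * w^p.2 / (p.2.factorial : ℂ)‖ ∂(volume.restrict (Set.Ioc (0:ℝ) 1)) := by
          apply integral_mono_of_nonneg (Filter.Eventually.of_forall fun t => norm_nonneg _)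
            (integrable_const _)
          exact (ae_restrict_iff' measurableSet_Ioc).2 (Filter.Eventually.of_forall key)
      _ = _ := by simp [Real.volume_Ioc]
  have hF_sum := Summable.of_nonneg_of_le
    (fun p => integral_nonneg fun t => norm_nonneg _) hbound hCsum
  have key := hasSum_integral_of_summable_integral_norm hFint hF_sum
  have hIeq : (∫ t, (∑' p : ℕ × ℕ, (a p.1 * ((t:ℂ)*w)^p.1 / (p.1.factorial : ℂ)) *
      (b p.2 * ((1-(t:ℂ))*w)^p.2 / (p.2.factorial : ℂ))) ∂(volume.restrict (Set.Ioc (0:ℝ) 1)))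
      = ∫ t in (0:ℝ)..1, f ((t:ℂ)*w) * g ((1-(t:ℂ))*w) := by
    rw [intervalIntegral.integral_of_le zero_le_one]
    exact integral_congr_ae (Filter.Eventually.of_forall fun t => (hptwise t).tsum_eq)
  rw [hIeq] at key
  have heval : ∀ p : ℕ × ℕ, (∫ t, (a p.1 * ((t:ℂ)*w)^p.1 / (p.1.factorial : ℂ)) *
      (b p.2 * ((1-(t:ℂ))*w)^p.2 / (p.2.factorial : ℂ)) ∂(volume.restrict (Set.Ioc (0:ℝ) 1)))
      = a p.1 * b p.2 * w^(p.1+p.2) / (((p.1+p.2+1).factorial : ℕ) : ℂ) := by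
    intro p
    rw [← intervalIntegral.integral_of_le zero_le_one]
    exact F_integral (a p.1) (b p.2) w p.1 p.2
  simpa only [heval] using key

/-- Hurwitz's additive convolution at the level of Taylor coefficients: if
`f(w) = ∑ a_n w^n/n!` and `g(w) = ∑ b_n w^n/n!` (convergent for every `w ∈ ℂ`), then for
every `w` the series `∑_n (∑_{i+j=n} a_i b_j) w^{n+1}/(n+1)!` converges with sum equal to
the Hurwitz convolution `(f ∗ g)(w) = ∫₀^w f(u) g(w-u) du = w ∫₀¹ f(tw) g((1-t)w) dt`. -/
theorem hurwitz_convolution_series (a b : ℕ → ℂ) (f g : ℂ → ℂ)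
    (hf : ∀ w : ℂ, HasSum (fun n : ℕ => a n * w ^ n / (n.factorial : ℂ)) (f w))
    (hg : ∀ w : ℂ, HasSum (fun n : ℕ => b n * w ^ n / (n.factorial : ℂ)) (g w))
    (w : ℂ) :
    HasSum
      (fun n : ℕ =>
        (∑ p ∈ Finset.HasAntidiagonal.antidiagonal n, a p.1 * b p.2) * w ^ (n + 1) / ((n + 1).factorial : ℂ))
      (w * ∫ t in (0 : ℝ)..1, f ((t : ℂ) * w) * g ((1 - (t : ℂ)) * w)) := by
  have key := (prod_hasSum a b f g hf hg w).mul_left w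
  have keyS := (Finset.HasAntidiagonal.sigmaAntidiagonalEquivProd (A := ℕ)).hasSum_iff.2 key
  apply keyS.sigma
  intro n
  have h2 : (∑ c : {x // x ∈ Finset.HasAntidiagonal.antidiagonal n},
      w * (a (c:ℕ×ℕ).1 * b (c:ℕ×ℕ).2 * w ^ ((c:ℕ×ℕ).1+(c:ℕ×ℕ).2) /
        ((((c:ℕ×ℕ).1+(c:ℕ×ℕ).2+1).factorial : ℕ) : ℂ)))
      = (∑ p ∈ Finset.HasAntidiagonal.antidiagonal n, a p.1 * b p.2) * w ^ (n + 1) /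
        ((n + 1).factorial : ℂ) := by
    rw [Finset.sum_coe_sort (Finset.HasAntidiagonal.antidiagonal n)
      (fun p : ℕ×ℕ => w * (a p.1 * b p.2 * w ^ (p.1+p.2) / (((p.1+p.2+1).factorial : ℕ) : ℂ)))]
    have hcongr : ∀ p ∈ Finset.HasAntidiagonal.antidiagonal n,
        w * (a p.1 * b p.2 * w ^ (p.1+p.2) / (((p.1+p.2+1).factorial : ℕ) : ℂ))
        = (a p.1 * b p.2) * (w ^ (n+1) / (((n+1).factorial : ℕ) : ℂ)) := by
      intro p hp
      have hpn : p.1 + p.2 = n := Finset.HasAntidiagonal.mem_antidiagonal.1 hp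
      rw [← hpn, pow_succ]
      ring
    rw [Finset.sum_congr rfl hcongr, ← Finset.sum_mul, mul_div_assoc]
  exact h2 ▸ hasSum_fintype _
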